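/- For an invertible real n×n matrix X, the absolute value of its determinant is less than or equal to the product of the Euclidean norms of its columns (Hadamard's inequality). -/

import Mathlib

open Matrix Filter

/-- The k-th largest singular value (0-indexed) of a real square matrix:
square roots of the eigenvalues of `Xᵀ * X`, sorted in decreasing order. -/
noncomputable def svalDesc {n : ℕ} (X : Matrix (Fin n) (Fin n) ℝ) (k : Fin n) : ℝ :=
  Real.sqrt (((Matrix.isHermitian_conjTranspose_mul_self X).eigenvalues ∘
    Tuple.sort ((Matrix.isHermitian_conjTranspose_mul_self X).eigenvalues)) k.rev)

/-- Euclidean norm of the j-th column of X. -/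
noncomputable def colNorm {n : ℕ} (X : Matrix (Fin n) (Fin n) ℝ) (j : Fin n) : ℝ :=
  Real.sqrt (∑ i, (X i j) ^ 2)

/-- trace = sum of eigenvalues for a real symmetric matrix -/
lemma trace_eq_sum_eigs {n : ℕ} {A : Matrix (Fin n) (Fin n) ℝ} (hA : A.IsHermitian) :
    A.trace = ∑ i, hA.eigenvalues i := by
  conv_lhs => rw [hA.spectral_theorem, Unitary.conjStarAlgAut_apply]
  rw [Matrix.trace_mul_cycle]
  have h1 : (star (hA.eigenvectorUnitary : Matrix (Fin n) (Fin n) ℝ)) *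
      (hA.eigenvectorUnitary : Matrix (Fin n) (Fin n) ℝ) = 1 :=
    (Matrix.mem_unitaryGroup_iff'.mp hA.eigenvectorUnitary.2).symm ▸ hA.eigenvectorUnitary.2.1
  rw [h1, Matrix.one_mul, Matrix.trace_diagonal]
  simp [RCLike.ofReal_sum]

/-- AM-GM consequence: nonneg reals with sum n have product ≤ 1 -/
lemma prod_le_one_of_sum_eq {n : ℕ} (hn : n ≠ 0) (z : Fin n → ℝ) (hz : ∀ i, 0 ≤ z i)
    (hsum : ∑ i, z i = n) : ∏ i, z i ≤ 1 := by
  have hw : ∑ _i : Fin n, (n : ℝ)⁻¹ = 1 := by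
    simp [Finset.sum_const, Finset.card_univ]
    field_simp
  have key := Real.geom_mean_le_arith_mean_weighted Finset.univ (fun _ => (n : ℝ)⁻¹) z
    (fun i _ => by positivity) hw (fun i _ => hz i)
  have hrhs : ∑ i, (n : ℝ)⁻¹ * z i = 1 := by
    rw [← Finset.mul_sum, hsum]
    field_simp
  rw [hrhs] at key
  have h2 : (∏ i, z i ^ ((n : ℝ)⁻¹)) ^ (n : ℕ) ≤ 1 ^ (n : ℕ) :=
    pow_le_pow_left₀ (Finset.prod_nonneg fun i _ => Real.rpow_nonneg (hz i) _) key n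
  rw [one_pow, ← Finset.prod_pow] at h2
  calc ∏ i, z i = ∏ i, (z i ^ ((n:ℝ)⁻¹)) ^ (n : ℕ) := by
        refine Finset.prod_congr rfl fun i _ => ?_
        rw [← Real.rpow_natCast (z i ^ ((n:ℝ)⁻¹)) n, ← Real.rpow_mul (hz i),
          inv_mul_cancel₀ (by exact_mod_cast hn), Real.rpow_one]
    _ ≤ 1 := h2

/-- Hadamard's inequality: for an invertible real n×n matrix,
|det X| is at most the product of the Euclidean norms of its columns. -/
theorem hadamard_det_le_prod_colNorm {n : ℕ} (X : Matrix (Fin n) (Fin n) ℝ)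
    (hX : IsUnit X.det) :
    |X.det| ≤ ∏ j, colNorm X j := by
  rcases Nat.eq_zero_or_pos n with hn | hn
  · subst hn
    simp [Matrix.det_fin_zero]
  -- column norms are positive
  have hcpos : ∀ j, 0 < colNorm X j := by
    intro j
    rw [colNorm]
    have hex : ∃ i, X i j ≠ 0 := by
      by_contra h
      push_neg at h
      exact hX.ne_zero (Matrix.det_eq_zero_of_column_eq_zero j h)
    obtain ⟨i, hi⟩ := hex
    exact Real.sqrt_pos.mpr (Finset.sum_pos' (fun i _ => sq_nonneg _)
      ⟨i, Finset.mem_univ i, by positivity⟩)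
  have hcsq : ∀ j, (colNorm X j) ^ 2 = ∑ i, (X i j) ^ 2 := fun j =>
    Real.sq_sqrt (Finset.sum_nonneg fun i _ => sq_nonneg _)
  set Y : Matrix (Fin n) (Fin n) ℝ := X * Matrix.diagonal (fun j => (colNorm X j)⁻¹) with hY
  have hYent : ∀ i j, Y i j = X i j * (colNorm X j)⁻¹ := by
    intro i j
    simp [hY, Matrix.mul_diagonal]
  have hG : (Yᵀ * Y).IsHermitian := Matrix.isHermitian_conjTranspose_mul_self Y
  have hPSD : (Yᵀ * Y).PosSemidef := by
    simpa using Matrix.posSemidef_conjTranspose_mul_self Y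
  -- trace of the Gram matrix is n
  have htr : (Yᵀ * Y).trace = n := by
    rw [Matrix.trace]
    have : ∀ j, (Yᵀ * Y) j j = (1:ℝ) := by
      intro j
      rw [Matrix.mul_apply]
      have : ∑ i, Yᵀ j i * Y i j = ∑ i, (X i j)^2 * ((colNorm X j)⁻¹)^2 := by
        refine Finset.sum_congr rfl fun i _ => ?_
        rw [Matrix.transpose_apply, hYent]
        ring
      rw [this, ← Finset.sum_mul, ← hcsq j, ← mul_pow, mul_inv_cancel₀ (hcpos j).ne', one_pow]
    simp [Matrix.diag, this]
  have hsum : ∑ i, hG.eigenvalues i = n := by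
    rw [← trace_eq_sum_eigs hG, htr]
  have hprod : (Yᵀ * Y).det ≤ 1 := by
    rw [hG.det_eq_prod_eigenvalues]
    exact_mod_cast prod_le_one_of_sum_eq hn.ne' hG.eigenvalues hPSD.eigenvalues_nonneg
      (by exact_mod_cast hsum)
  have hdetY : Y.det ^ 2 ≤ 1 := by
    have : (Yᵀ * Y).det = Y.det ^ 2 := by
      rw [Matrix.det_mul, Matrix.det_transpose]; ring
    linarith [this ▸ hprod]
  have habsY : |Y.det| ≤ 1 := (sq_le_one_iff_abs_le_one _).mp hdetY
  have hdetY2 : Y.det = X.det * ∏ j, (colNorm X j)⁻¹ := by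
    rw [hY, Matrix.det_mul, Matrix.det_diagonal]
  have hprodpos : 0 < ∏ j, colNorm X j := Finset.prod_pos fun j _ => hcpos j
  have := mul_le_mul_of_nonneg_right habsY hprodpos.le
  rw [one_mul, hdetY2, abs_mul, Finset.abs_prod] at this
  have hcancel : (∏ j, |(colNorm X j)⁻¹|) * ∏ j, colNorm X j = 1 := by
    rw [← Finset.prod_mul_distrib]
    have h1 : ∀ j ∈ Finset.univ, |(colNorm X j)⁻¹| * colNorm X j = 1 := fun j _ => by
      rw [abs_of_pos (inv_pos.mpr (hcpos j)), inv_mul_cancel₀ (hcpos j).ne']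
    rw [Finset.prod_congr rfl h1, Finset.prod_const_one]
  calc |X.det| = (|X.det| * ∏ j, |(colNorm X j)⁻¹|) * ∏ j, colNorm X j := by
        rw [mul_assoc, hcancel, mul_one]
    _ ≤ ∏ j, colNorm X j := this
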